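/- Let c, a, d, m, p, q ∈ ℝ with q ≠ 0 and c ≠ m, and suppose that for every y ∈ ℝ: y²·(c − y²/2) + a·y + d = −(1/2)·(y − m)²·((y − p)² + q²) (so the quartic P(y) = y²(c − y²/2) + ay + d has m as its only real zero, of multiplicity two). If φ : ℝ → ℝ is differentiable and satisfies (φ'(ξ))²·(c − φ(ξ)) = φ(ξ)²·(c − φ(ξ)²/2) + a·φ(ξ) + d for all ξ ∈ ℝ, then either φ(ξ) = m for all ξ, or φ is unbounded (its range is not a bounded subset of ℝ). -/
import Mathlib


open Bornology Set

/-- Wherever the solution differs from `m`, it lies above `c` and has nonzero derivative. -/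
private lemma mCH_sign_aux (c a d m p q : ℝ) (hq : q ≠ 0)
    (hfac : ∀ y : ℝ,
      y ^ 2 * (c - y ^ 2 / 2) + a * y + d =
        -(1 / 2) * (y - m) ^ 2 * ((y - p) ^ 2 + q ^ 2))
    (φ : ℝ → ℝ)
    (heq : ∀ ξ : ℝ,
      (deriv φ ξ) ^ 2 * (c - φ ξ) =
        (φ ξ) ^ 2 * (c - (φ ξ) ^ 2 / 2) + a * φ ξ + d)
    (ξ : ℝ) (h : φ ξ ≠ m) : c < φ ξ ∧ deriv φ ξ ≠ 0 := by
  have h1 := heq ξ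
  rw [hfac (φ ξ)] at h1
  have h2 : (0:ℝ) < (φ ξ - m) ^ 2 := by
    have := sub_ne_zero.2 h
    positivity
  have h3 : (0:ℝ) < (φ ξ - p) ^ 2 + q ^ 2 := by positivity
  have hneg : (deriv φ ξ) ^ 2 * (c - φ ξ) < 0 := by nlinarith
  constructor
  · nlinarith [sq_nonneg (deriv φ ξ)]
  · intro h0
    rw [h0] at hneg
    norm_num at hneg

/-- Darboux-type sign propagation: a nonvanishing derivative that is positive at the left
endpoint stays positive on the interval. -/
private lemma mCH_darboux_pos (φ : ℝ → ℝ) (hφ : Differentiable ℝ φ) {x₀ x : ℝ} (hx : x₀ ≤ x)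
    (hne : ∀ t ∈ Icc x₀ x, deriv φ t ≠ 0) (h0 : 0 < deriv φ x₀) :
    ∀ t ∈ Icc x₀ x, 0 < deriv φ t := by
  rcases hasDerivWithinAt_forall_lt_or_forall_gt_of_forall_ne (convex_Icc x₀ x)
      (fun t _ => (hφ t).hasDerivAt.hasDerivWithinAt) hne with h | h
  · exact absurd (h x₀ (left_mem_Icc.2 hx)) (not_lt.2 h0.le)
  · exact h

set_option maxHeartbeats 1000000 in
/-- Main workhorse: a bounded solution cannot have `|ψ - m|` strictly increasing anywhere. -/
private lemma mCH_blowup (c a d m p q M : ℝ) (hq : q ≠ 0)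
    (hfac : ∀ y : ℝ,
      y ^ 2 * (c - y ^ 2 / 2) + a * y + d =
        -(1 / 2) * (y - m) ^ 2 * ((y - p) ^ 2 + q ^ 2))
    (ψ : ℝ → ℝ) (hψ : Differentiable ℝ ψ)
    (heq : ∀ ξ : ℝ,
      (deriv ψ ξ) ^ 2 * (c - ψ ξ) =
        (ψ ξ) ^ 2 * (c - (ψ ξ) ^ 2 / 2) + a * ψ ξ + d)
    (hM : ∀ ξ, |ψ ξ| ≤ M) (ξ₀ : ℝ)
    (h0 : 0 < (ψ ξ₀ - m) * deriv ψ ξ₀) : False := by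
  have hne0 : ψ ξ₀ ≠ m := by
    intro h; rw [h] at h0; simp at h0
  obtain ⟨hc0, _⟩ := mCH_sign_aux c a d m p q hq hfac ψ heq ξ₀ hne0
  have hMc : 0 < M - c := by
    have := hM ξ₀
    have := le_abs_self (ψ ξ₀)
    linarith
  obtain ⟨σ, hσ1, hσε, hσd⟩ :
      ∃ σ : ℝ, (σ = 1 ∨ σ = -1) ∧ 0 < σ * (ψ ξ₀ - m) ∧ 0 < σ * deriv ψ ξ₀ := by
    rcases lt_or_gt_of_ne (sub_ne_zero.2 hne0) with h | h
    · exact ⟨-1, Or.inr rfl, by nlinarith, by nlinarith⟩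
    · exact ⟨1, Or.inl rfl, by nlinarith, by nlinarith⟩
  have hσsq : σ ^ 2 = 1 := by rcases hσ1 with h | h <;> rw [h] <;> norm_num
  have hσabs : |σ| = 1 := by rcases hσ1 with h | h <;> rw [h] <;> norm_num
  have hσne : σ ≠ 0 := by rcases hσ1 with h | h <;> rw [h] <;> norm_num
  set χ : ℝ → ℝ := fun ξ => σ * (ψ ξ - m) with hχdef
  have hχval : ∀ ξ, χ ξ = σ * (ψ ξ - m) := fun _ => rfl
  have hχdiff : Differentiable ℝ χ := (hψ.sub_const m).const_mul σ
  have hχderiv : ∀ ξ, deriv χ ξ = σ * deriv ψ ξ := by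
    intro ξ
    rw [hχdef]
    rw [deriv_const_mul _ ((hψ ξ).sub_const m)]
    congr 1
    rw [deriv_sub_const]
  set ε : ℝ := σ * (ψ ξ₀ - m) with hεdef
  have hεχ : χ ξ₀ = ε := rfl
  have hε : 0 < ε := hσε
  have hχ'0 : 0 < deriv χ ξ₀ := by rw [hχderiv]; exact hσd
  set δ : ℝ := ε ^ 2 * q ^ 2 / (2 * (M - c)) with hδdef
  have hδ : 0 < δ := by
    have hq2 : 0 < q ^ 2 := by positivity
    rw [hδdef]; positivity
  -- key pointwise estimate
  have hkey : ∀ t, ε ≤ χ t → (ψ t ≠ m ∧ δ ≤ (deriv ψ t) ^ 2) := by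
    intro t ht
    rw [hχval] at ht
    have hsq : (ψ t - m) ^ 2 = (σ * (ψ t - m)) ^ 2 := by
      rw [mul_pow, hσsq, one_mul]
    have htne : ψ t ≠ m := by
      intro h
      rw [h] at ht
      simp at ht
      linarith
    refine ⟨htne, ?_⟩
    obtain ⟨hct, _⟩ := mCH_sign_aux c a d m p q hq hfac ψ heq t htne
    have h1 := heq t
    rw [hfac (ψ t)] at h1
    have h2 : (ψ t - m) ^ 2 ≥ ε ^ 2 := by
      rw [hsq]
      nlinarith
    have h3 : (ψ t - p) ^ 2 + q ^ 2 ≥ q ^ 2 := by nlinarith [sq_nonneg (ψ t - p)]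
    have h4 : ψ t ≤ M := (abs_le.1 (hM t)).2
    have h5 : (deriv ψ t) ^ 2 * (ψ t - c) ≥ ε ^ 2 * q ^ 2 / 2 := by nlinarith [sq_nonneg q]
    have h6 : (deriv ψ t) ^ 2 * (M - c) ≥ ε ^ 2 * q ^ 2 / 2 := by
      nlinarith [sq_nonneg (deriv ψ t)]
    rw [hδdef, div_le_iff₀ (by linarith)]
    linarith
  -- Stage 1: χ stays ≥ ε to the right of ξ₀
  have hstage1 : ∀ ξ, ξ₀ ≤ ξ → ε ≤ χ ξ := by
    by_contra hcon
    push_neg at hcon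
    obtain ⟨ξ₁, hξ₁ge, hξ₁lt⟩ := hcon
    have hξ₁gt : ξ₀ < ξ₁ := by
      rcases lt_or_eq_of_le hξ₁ge with h | h
      · exact h
      · exfalso; rw [← h, hεχ] at hξ₁lt; exact absurd hξ₁lt (lt_irrefl ε)
    -- local increase at ξ₀
    have hslope : ∀ᶠ t in nhdsWithin ξ₀ (Ioi ξ₀), 0 < slope χ ξ₀ t := by
      have hd := (hχdiff ξ₀).hasDerivAt
      rw [hasDerivAt_iff_tendsto_slope] at hd
      have hle : nhdsWithin ξ₀ (Ioi ξ₀) ≤ nhdsWithin ξ₀ {ξ₀}ᶜ :=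
        nhdsWithin_mono ξ₀ (fun x hx => (LT.lt.ne' hx : x ≠ ξ₀))
      exact ((hd.mono_left hle).eventually (eventually_gt_nhds hχ'0))
    have hloc : ∀ᶠ t in nhdsWithin ξ₀ (Ioi ξ₀), ε < χ t := by
      filter_upwards [hslope, self_mem_nhdsWithin] with t ht ht'
      rw [slope_def_field] at ht
      have h2 : 0 < t - ξ₀ := sub_pos.2 ht'
      have h3 : 0 < χ t - χ ξ₀ := by
        rcases div_pos_iff.1 ht with ⟨h4, _⟩ | ⟨_, h5⟩
        · exact h4
        · linarith
      linarith
    obtain ⟨u, hu, husub⟩ := mem_nhdsGT_iff_exists_Ioc_subset.1 hloc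
    rw [mem_Ioi] at hu
    by_cases hcase : ξ₁ ≤ u
    · exact absurd (husub ⟨hξ₁gt, hcase⟩) (not_lt.2 hξ₁lt.le)
    push_neg at hcase
    set B : Set ℝ := {t | t ∈ Icc ξ₀ ξ₁ ∧ χ t < ε} with hBdef
    have hBne : B.Nonempty := ⟨ξ₁, ⟨hξ₁ge, le_refl _⟩, hξ₁lt⟩
    have hBbdd : BddBelow B := ⟨ξ₀, fun t ht => ht.1.1⟩
    set b : ℝ := sInf B with hbdef
    have hblow : ∀ t ∈ B, u ≤ t := by
      intro t ht
      by_contra hcon2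
      push_neg at hcon2
      have ht0 : ξ₀ < t := by
        rcases lt_or_eq_of_le ht.1.1 with h | h
        · exact h
        · exfalso
          have h2 := ht.2
          rw [← h, hεχ] at h2
          exact lt_irrefl ε h2
      exact absurd (husub ⟨ht0, hcon2.le⟩) (not_lt.2 ht.2.le)
    have hbge : u ≤ b := le_csInf hBne hblow
    have hbgt : ξ₀ < b := lt_of_lt_of_le hu hbge
    have hble : b ≤ ξ₁ := csInf_le hBbdd ⟨⟨hξ₁ge, le_refl _⟩, hξ₁lt⟩
    have hbcl : χ b ≤ ε := by
      have hmem : b ∈ closure B := csInf_mem_closure hBne hBbdd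
      have hsub : closure B ⊆ {t | χ t ≤ ε} := by
        apply closure_minimal
        · intro t ht; exact ht.2.le
        · exact isClosed_le hχdiff.continuous continuous_const
      exact hsub hmem
    have hIco : ∀ t ∈ Ico ξ₀ b, ε ≤ χ t := by
      intro t ht
      by_contra hcon2
      push_neg at hcon2
      have : t ∈ B := ⟨⟨ht.1, le_trans ht.2.le hble⟩, hcon2⟩
      exact absurd (csInf_le hBbdd this) (not_le.2 ht.2)
    -- deriv χ > 0 on Ico ξ₀ b
    have hdpos : ∀ t ∈ Ico ξ₀ b, 0 < deriv χ t := by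
      intro t ht
      have hne : ∀ s ∈ Icc ξ₀ t, deriv χ s ≠ 0 := by
        intro s hs
        have hs' : s ∈ Ico ξ₀ b := ⟨hs.1, lt_of_le_of_lt hs.2 ht.2⟩
        obtain ⟨hsne, _⟩ := hkey s (hIco s hs')
        obtain ⟨_, hd⟩ := mCH_sign_aux c a d m p q hq hfac ψ heq s hsne
        rw [hχderiv]
        exact mul_ne_zero hσne hd
      exact mCH_darboux_pos χ hχdiff ht.1 hne hχ'0 t (right_mem_Icc.2 ht.1)
    have hmono : StrictMonoOn χ (Icc ξ₀ b) := by
      apply strictMonoOn_of_deriv_pos (convex_Icc ξ₀ b) hχdiff.continuous.continuousOn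
      intro t ht
      rw [interior_Icc] at ht
      exact hdpos t ⟨ht.1.le, ht.2⟩
    have := hmono (left_mem_Icc.2 hbgt.le) (right_mem_Icc.2 hbgt.le) hbgt
    rw [hεχ] at this
    linarith
  -- Stage 2: deriv χ ≥ √δ on [ξ₀, ∞), hence linear growth
  have hdge : ∀ t, ξ₀ ≤ t → Real.sqrt δ ≤ deriv χ t := by
    intro t ht
    have hdpos : 0 < deriv χ t := by
      have hne : ∀ s ∈ Icc ξ₀ t, deriv χ s ≠ 0 := by
        intro s hs
        obtain ⟨hsne, _⟩ := hkey s (hstage1 s hs.1)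
        obtain ⟨_, hd⟩ := mCH_sign_aux c a d m p q hq hfac ψ heq s hsne
        rw [hχderiv]
        exact mul_ne_zero hσne hd
      exact mCH_darboux_pos χ hχdiff ht hne hχ'0 t (right_mem_Icc.2 ht)
    have hsq : δ ≤ (deriv χ t) ^ 2 := by
      obtain ⟨_, h⟩ := hkey t (hstage1 t ht)
      rw [hχderiv, mul_pow, hσsq, one_mul]
      exact h
    calc Real.sqrt δ ≤ Real.sqrt ((deriv χ t) ^ 2) := Real.sqrt_le_sqrt hsq
      _ = |deriv χ t| := by rw [Real.sqrt_sq_eq_abs]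
      _ = deriv χ t := abs_of_pos hdpos
  have hsδ : 0 < Real.sqrt δ := Real.sqrt_pos.2 hδ
  -- linear growth contradicts boundedness
  have hgdiff : Differentiable ℝ (fun ξ => χ ξ - Real.sqrt δ * ξ) :=
    hχdiff.sub (differentiable_id.const_mul _)
  have hgderiv : ∀ t, deriv (fun ξ => χ ξ - Real.sqrt δ * ξ) t = deriv χ t - Real.sqrt δ := by
    intro t
    have h1 : HasDerivAt (fun ξ : ℝ => Real.sqrt δ * ξ) (Real.sqrt δ) t := by
      simpa using (hasDerivAt_id t).const_mul (Real.sqrt δ)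
    exact ((hχdiff t).hasDerivAt.sub h1).deriv
  have hgmono : MonotoneOn (fun ξ => χ ξ - Real.sqrt δ * ξ) (Ici ξ₀) := by
    apply monotoneOn_of_deriv_nonneg (convex_Ici ξ₀) hgdiff.continuous.continuousOn
      (fun t _ => (hgdiff t).differentiableWithinAt)
    intro t ht
    rw [interior_Ici] at ht
    rw [hgderiv]
    linarith [hdge t ht.le]
  set ξ₂ : ℝ := ξ₀ + (M + |m| + 1) / Real.sqrt δ with hξ₂def
  have hξ₂ge : ξ₀ ≤ ξ₂ := by
    rw [hξ₂def]
    have hM0 : 0 ≤ M := le_trans (abs_nonneg _) (hM ξ₀)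
    have : 0 ≤ (M + |m| + 1) / Real.sqrt δ := by
      apply div_nonneg _ hsδ.le
      have := abs_nonneg m
      linarith
    linarith
  have hg := hgmono (mem_Ici.2 (le_refl ξ₀)) (mem_Ici.2 hξ₂ge) hξ₂ge
  simp only at hg
  have hval : Real.sqrt δ * (ξ₂ - ξ₀) = M + |m| + 1 := by
    rw [hξ₂def]
    field_simp
    ring
  have hgrow : ε + (M + |m| + 1) ≤ χ ξ₂ := by
    rw [← hεχ, ← hval]
    linarith [hg]
  have hbound : χ ξ₂ ≤ M + |m| := by
    rw [hχval]
    calc σ * (ψ ξ₂ - m) ≤ |σ * (ψ ξ₂ - m)| := le_abs_self _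
      _ = |σ| * |ψ ξ₂ - m| := abs_mul _ _
      _ ≤ 1 * (|ψ ξ₂| + |m|) := by
          rw [hσabs]
          exact mul_le_mul (le_refl 1) (abs_sub _ _) (abs_nonneg _) zero_le_one
      _ ≤ M + |m| := by rw [one_mul]; linarith [hM ξ₂]
  linarith

/-- Non-existence of bounded nonconstant traveling waves when the quartic
`P(y) = y²(c - y²/2) + ay + d` has a single (double) real zero `m`: any differentiable
global solution of `(φ')²(c - φ) = P(φ)` is either identically `m` or unbounded. -/
theorem mCH_no_bounded_wave_one_real_zero (c a d m p q : ℝ) (hq : q ≠ 0) (hcm : c ≠ m)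
    (hfac : ∀ y : ℝ,
      y ^ 2 * (c - y ^ 2 / 2) + a * y + d =
        -(1 / 2) * (y - m) ^ 2 * ((y - p) ^ 2 + q ^ 2))
    (φ : ℝ → ℝ) (hφ : Differentiable ℝ φ)
    (heq : ∀ ξ : ℝ,
      (deriv φ ξ) ^ 2 * (c - φ ξ) =
        (φ ξ) ^ 2 * (c - (φ ξ) ^ 2 / 2) + a * φ ξ + d) :
    (∀ ξ : ℝ, φ ξ = m) ∨ ¬ IsBounded (Set.range φ) := by
  by_cases hall : ∀ ξ : ℝ, φ ξ = m
  · exact Or.inl hall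
  right
  intro hb
  push_neg at hall
  obtain ⟨ξ₀, hξ₀⟩ := hall
  obtain ⟨M, hM⟩ : ∃ M, ∀ ξ, |φ ξ| ≤ M := by
    rw [isBounded_iff_forall_norm_le] at hb
    obtain ⟨M, hM⟩ := hb
    exact ⟨M, fun ξ => hM _ (Set.mem_range_self ξ)⟩
  obtain ⟨_, hd⟩ := mCH_sign_aux c a d m p q hq hfac φ heq ξ₀ hξ₀
  rcases lt_trichotomy ((φ ξ₀ - m) * deriv φ ξ₀) 0 with hlt | he | hgt
  · -- reflect time
    have hψdiff : Differentiable ℝ (fun ξ => φ (-ξ)) := hφ.comp differentiable_neg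
    have hder : ∀ ξ, deriv (fun ξ => φ (-ξ)) ξ = -deriv φ (-ξ) := fun ξ => deriv_comp_neg φ ξ
    have heq' : ∀ ξ : ℝ,
        (deriv (fun ξ => φ (-ξ)) ξ) ^ 2 * (c - (fun ξ => φ (-ξ)) ξ) =
          ((fun ξ => φ (-ξ)) ξ) ^ 2 * (c - ((fun ξ => φ (-ξ)) ξ) ^ 2 / 2)
            + a * (fun ξ => φ (-ξ)) ξ + d := by
      intro ξ
      simp only
      rw [hder ξ, neg_pow]
      simpa using heq (-ξ)
    have hM' : ∀ ξ, |(fun ξ => φ (-ξ)) ξ| ≤ M := fun ξ => hM (-ξ)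
    apply mCH_blowup c a d m p q M hq hfac (fun ξ => φ (-ξ)) hψdiff heq' hM' (-ξ₀)
    have h2 : deriv (fun ξ => φ (-ξ)) (-ξ₀) = -deriv φ ξ₀ := by rw [hder]; simp
    simp only [neg_neg]
    rw [h2]
    nlinarith
  · exact absurd he (mul_ne_zero (sub_ne_zero.2 hξ₀) hd)
  · exact mCH_blowup c a d m p q M hq hfac φ hφ heq hM ξ₀ hgt
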